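/- If w ∈ N_inf(p), then the word 𝑤̄ (the image of w under the bar map) contains no forbidden subword; that is, 𝑤̄ belongs to N_fin(p). -/

import Mathlib

/-- `N_inf(p)` (letters encoded as pairs `(i, ε)` with `ε : Bool`, `true` = `+1`):
each pair of consecutive letters satisfies (a) `i_k < i_{k+1}`, or
(b) `i_k = i_{k+1}` and `ε_k = ε_{k+1}`, or (c) `0 < i_k − i_{k+1} < p` and
`ε_{k+1} = −1`. -/
def NInf (p : ℕ) (w : List (ℕ × Bool)) : Prop :=
  List.Chain' (fun a b : ℕ × Bool =>
    a.1 < b.1 ∨ (a.1 = b.1 ∧ a.2 = b.2) ∨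
    (b.1 < a.1 ∧ a.1 - b.1 < p ∧ b.2 = false)) w

/-- Cancel (exhaustively) all adjacent pairs `x_0^ε x_0^{−ε}` in a word. -/
def reduce0 : List (ℕ × Bool) → List (ℕ × Bool)
  | [] => []
  | a :: l =>
    match reduce0 l with
    | [] => [a]
    | b :: t => if a.1 = 0 ∧ b.1 = 0 ∧ a.2 = !b.2 then t else a :: b :: t

/-- Expansion of a letter: `x_j^ε` with `j = r + d(p−1)`, `1 ≤ r ≤ p−1`,
`d ≥ 0`, becomes `x_0^{−d} x_r^ε x_0^{d}`; the letter `x_0^{±1}` is unchanged. -/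
def letterExpand (p : ℕ) (a : ℕ × Bool) : List (ℕ × Bool) :=
  if a.1 = 0 then [a]
  else
    List.replicate ((a.1 - 1) / (p - 1)) ((0 : ℕ), false) ++
      [((a.1 - 1) % (p - 1) + 1, a.2)] ++
      List.replicate ((a.1 - 1) / (p - 1)) ((0 : ℕ), true)

/-- The bar map: expand every letter and freely cancel adjacent pairs
`x_0^ε x_0^{−ε}`. -/
def barMap (p : ℕ) (w : List (ℕ × Bool)) : List (ℕ × Bool) :=
  reduce0 ((w.map (letterExpand p)).flatten)

/-- The forbidden subwords (1)–(5). -/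
def Forbidden (p : ℕ) (u : List (ℕ × Bool)) : Prop :=
  (∃ (i : ℕ) (ε : Bool), i ≤ p - 1 ∧ u = [(i, ε), (i, !ε)]) ∨
  (∃ (α β k : ℕ) (ε : Bool), 1 ≤ β ∧ β < α ∧ α ≤ p - 1 ∧
    u = (α, ε) :: (List.replicate k ((0 : ℕ), true) ++ [(β, true)])) ∨
  (∃ (α β k : ℕ) (ε : Bool), 1 ≤ β ∧ β < α ∧ α ≤ p - 1 ∧
    u = (α, ε) :: (List.replicate (k + 1) ((0 : ℕ), true) ++ [(β, false)])) ∨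
  (∃ (α β k : ℕ) (ε : Bool), 1 ≤ α ∧ α ≤ β ∧ β ≤ p - 1 ∧
    u = (α, ε) :: (List.replicate (k + 1) ((0 : ℕ), true) ++ [(β, true)])) ∨
  (∃ (α β k : ℕ) (ε : Bool), 1 ≤ α ∧ α ≤ β ∧ β ≤ p - 1 ∧
    u = (α, ε) :: (List.replicate (k + 2) ((0 : ℕ), true) ++ [(β, false)]))

/-- `N_fin(p)`: words over `x_0^{±1}, …, x_{p−1}^{±1}` with no forbidden
subword. -/
def NFin (p : ℕ) (w : List (ℕ × Bool)) : Prop :=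
  (∀ a ∈ w, a.1 ≤ p - 1) ∧ ∀ u, u <:+: w → ¬ Forbidden p u

/-- one step of `reduce0` -/
def step (a : ℕ × Bool) (l : List (ℕ × Bool)) : List (ℕ × Bool) :=
  match l with
  | [] => [a]
  | b :: t => if a.1 = 0 ∧ b.1 = 0 ∧ a.2 = !b.2 then t else a :: b :: t

lemma reduce0_eq_foldr (l : List (ℕ × Bool)) : reduce0 l = l.foldr step [] := by
  induction l with
  | nil => rfl
  | cons a l ih => rw [List.foldr_cons, ← ih]; rfl

lemma barMap_nil (p : ℕ) : barMap p [] = [] := rfl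

lemma barMap_cons (p : ℕ) (a : ℕ × Bool) (w : List (ℕ × Bool)) :
    barMap p (a :: w) = (letterExpand p a).foldr step (barMap p w) := by
  unfold barMap
  rw [List.map_cons, List.flatten_cons, reduce0_eq_foldr, reduce0_eq_foldr,
    List.foldr_append]

lemma step_no_cancel (a : ℕ × Bool) (l : List (ℕ × Bool))
    (h : ∀ x rest, l = x :: rest → ¬(a.1 = 0 ∧ x.1 = 0 ∧ a.2 = !x.2)) :
    step a l = a :: l := by
  cases l with
  | nil => rfl
  | cons x rest => simp [step, h x rest rfl]

lemma step_nz (a : ℕ × Bool) (ha : a.1 ≠ 0) (l : List (ℕ × Bool)) :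
    step a l = a :: l :=
  step_no_cancel a l (by intro x rest _ hc; exact ha hc.1)

lemma step_zT (l : List (ℕ × Bool)) (h : ∀ rest, l ≠ ((0:ℕ), false) :: rest) :
    step ((0:ℕ), true) l = ((0:ℕ), true) :: l := by
  apply step_no_cancel
  rintro x rest rfl hc
  obtain ⟨-, h1, h2⟩ := hc
  apply h rest
  have : x = ((0:ℕ), false) := by
    obtain ⟨x1, x2⟩ := x
    simp only at h1 h2
    subst h1
    cases x2 <;> simp_all
  rw [this]

lemma step_zF (l : List (ℕ × Bool)) (h : ∀ rest, l ≠ ((0:ℕ), true) :: rest) :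
    step ((0:ℕ), false) l = ((0:ℕ), false) :: l := by
  apply step_no_cancel
  rintro x rest rfl hc
  obtain ⟨-, h1, h2⟩ := hc
  apply h rest
  have : x = ((0:ℕ), true) := by
    obtain ⟨x1, x2⟩ := x
    simp only at h1 h2
    subst h1
    cases x2 <;> simp_all
  rw [this]

lemma step_zT_cancel (l : List (ℕ × Bool)) :
    step ((0:ℕ), true) (((0:ℕ), false) :: l) = l := by simp [step]

/-- heads of `replicate`-prefixed lists -/
def HNZ : List (ℕ × Bool) → Prop
  | [] => True
  | x :: _ => 1 ≤ x.1

lemma repT_ne_zF (t : ℕ) (rest : List (ℕ × Bool)) (h : HNZ rest) :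
    ∀ r', (List.replicate t ((0:ℕ), true) ++ rest) ≠ ((0:ℕ), false) :: r' := by
  intro r' hc
  cases t with
  | zero =>
    simp at hc
    cases rest with
    | nil => simp at hc
    | cons x xs => rw [hc] at h; simp [HNZ] at h
  | succ t => simp [List.replicate_succ] at hc

lemma repF_ne_zT (t : ℕ) (rest : List (ℕ × Bool)) (h : HNZ rest) :
    ∀ r', (List.replicate t ((0:ℕ), false) ++ rest) ≠ ((0:ℕ), true) :: r' := by
  intro r' hc
  cases t with
  | zero =>
    simp at hc
    cases rest with
    | nil => simp at hc
    | cons x xs => rw [hc] at h; simp [HNZ] at h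
  | succ t => simp [List.replicate_succ] at hc

lemma foldr_repF (n : ℕ) (l : List (ℕ × Bool)) (h : ∀ rest, l ≠ ((0:ℕ), true) :: rest) :
    List.foldr step l (List.replicate n ((0:ℕ), false)) =
      List.replicate n ((0:ℕ), false) ++ l := by
  induction n with
  | zero => simp
  | succ n ih =>
    rw [List.replicate_succ, List.foldr_cons, ih, step_zF]
    · simp [List.replicate_succ]
    · intro rest hc
      cases n with
      | zero => simp at hc; exact h rest hc
      | succ n => simp [List.replicate_succ] at hc

lemma foldr_repT (n : ℕ) (l : List (ℕ × Bool)) (h : ∀ rest, l ≠ ((0:ℕ), false) :: rest) :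
    List.foldr step l (List.replicate n ((0:ℕ), true)) =
      List.replicate n ((0:ℕ), true) ++ l := by
  induction n with
  | zero => simp
  | succ n ih =>
    rw [List.replicate_succ, List.foldr_cons, ih, step_zT]
    · simp [List.replicate_succ]
    · intro rest hc
      cases n with
      | zero => simp at hc; exact h rest hc
      | succ n => simp [List.replicate_succ] at hc

lemma foldr_repT_cancel (n : ℕ) (l : List (ℕ × Bool)) (h : ∀ rest, l ≠ ((0:ℕ), false) :: rest) :
    ∀ m : ℕ, List.foldr step (List.replicate m ((0:ℕ), false) ++ l) (List.replicate n ((0:ℕ), true)) =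
      if n ≤ m then List.replicate (m - n) ((0:ℕ), false) ++ l
      else List.replicate (n - m) ((0:ℕ), true) ++ l := by
  induction n with
  | zero => intro m; simp
  | succ n ih =>
    intro m
    rw [List.replicate_succ, List.foldr_cons, ih m]
    by_cases hnm : n ≤ m
    · rw [if_pos hnm]
      rcases Nat.eq_or_lt_of_le hnm with heq | hlt
      · subst heq
        rw [Nat.sub_self]
        simp only [List.replicate_zero, List.nil_append]
        rw [step_zT l h, if_neg (by omega)]
        have : n + 1 - n = 1 := by omega
        rw [this, List.replicate_one, List.singleton_append]
      · have h1 : m - n = (m - (n+1)) + 1 := by omega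
        rw [h1, List.replicate_succ, List.cons_append, step_zT_cancel, if_pos (by omega)]
    · rw [if_neg hnm]
      have h1 : n - m = (n - m - 1) + 1 := by omega
      rw [if_neg (by omega)]
      rw [h1, List.replicate_succ, List.cons_append, step_zT]
      · have : n + 1 - m = (n - m - 1) + 2 := by omega
        rw [this, List.replicate_succ, List.replicate_succ, List.cons_append, List.cons_append]
      · intro rest hc
        cases hn' : n - m - 1 with
        | zero => exact h rest (by simpa [hn'] using hc)
        | succ k => rw [hn'] at hc; simp [List.replicate_succ] at hc

lemma forbidden_ne_nil {p : ℕ} (h : Forbidden p []) : False := by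
  rcases h with ⟨i, e, _, h⟩ | ⟨a, b, k, e, _, _, _, h⟩ | ⟨a, b, k, e, _, _, _, h⟩ |
    ⟨a, b, k, e, _, _, _, h⟩ | ⟨a, b, k, e, _, _, _, h⟩ <;> simp at h

lemma nfin_nil (p : ℕ) : NFin p [] := by
  constructor
  · simp
  · intro u hu hF
    rw [List.infix_nil] at hu
    subst hu
    exact forbidden_ne_nil hF

lemma nfin_infix {p : ℕ} {w u : List (ℕ × Bool)} (hw : NFin p w) (hu : u <:+: w) :
    NFin p u :=
  ⟨fun a ha => hw.1 a (hu.sublist.subset ha), fun f hf => hw.2 f (hf.trans hu)⟩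

lemma nfin_cons {p : ℕ} {a : ℕ × Bool} {w : List (ℕ × Bool)} (ha : a.1 ≤ p - 1)
    (hw : NFin p w) (h : ∀ f, f <+: (a :: w) → ¬ Forbidden p f) : NFin p (a :: w) := by
  constructor
  · intro x hx
    rcases List.mem_cons.mp hx with rfl | hx
    · exact ha
    · exact hw.1 x hx
  · intro u hu
    rcases List.infix_cons_iff.mp hu with h1 | h1
    · exact h u h1
    · exact hw.2 u h1

/-- no forbidden prefix after consing `(0, false)` when head is not `(0, true)` -/
lemma noFP_zF {p : ℕ} {l : List (ℕ × Bool)} (hl : ∀ rest, l ≠ ((0:ℕ), true) :: rest) :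
    ∀ f, f <+: (((0:ℕ), false) :: l) → ¬ Forbidden p f := by
  intro f hf hF
  rcases hF with ⟨i, e, _, rfl⟩ | ⟨a, b, k, e, hb, hba, _, rfl⟩ | ⟨a, b, k, e, hb, hba, _, rfl⟩ |
    ⟨a, b, k, e, ha, hab, _, rfl⟩ | ⟨a, b, k, e, ha, hab, _, rfl⟩
  · rw [List.cons_prefix_cons] at hf
    obtain ⟨h1, h2⟩ := hf
    have hi : i = 0 := (Prod.mk.injEq .. ▸ h1).1
    have he : e = false := (Prod.mk.injEq .. ▸ h1).2
    subst hi he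
    rcases h2 with ⟨t, ht⟩
    exact hl (List.nil ++ t) (by simpa using ht.symm)
  all_goals {
    rw [List.cons_prefix_cons] at hf
    have : a = 0 := (Prod.mk.injEq .. ▸ hf.1).1
    omega
  }

/-- no forbidden prefix after consing `(0, true)` when head is not `(0, false)` -/
lemma noFP_zT {p : ℕ} {l : List (ℕ × Bool)} (hl : ∀ rest, l ≠ ((0:ℕ), false) :: rest) :
    ∀ f, f <+: (((0:ℕ), true) :: l) → ¬ Forbidden p f := by
  intro f hf hF
  rcases hF with ⟨i, e, _, rfl⟩ | ⟨a, b, k, e, hb, hba, _, rfl⟩ | ⟨a, b, k, e, hb, hba, _, rfl⟩ |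
    ⟨a, b, k, e, ha, hab, _, rfl⟩ | ⟨a, b, k, e, ha, hab, _, rfl⟩
  · rw [List.cons_prefix_cons] at hf
    obtain ⟨h1, h2⟩ := hf
    have hi : i = 0 := (Prod.mk.injEq .. ▸ h1).1
    have he : e = true := (Prod.mk.injEq .. ▸ h1).2
    subst hi he
    rcases h2 with ⟨t, ht⟩
    exact hl (List.nil ++ t) (by simpa using ht.symm)
  all_goals {
    rw [List.cons_prefix_cons] at hf
    have : a = 0 := (Prod.mk.injEq .. ▸ hf.1).1
    omega
  }

lemma key_prefix {β : ℕ} {b : Bool} {l' : List (ℕ × Bool)} :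
    ∀ (t k : ℕ), (List.replicate k ((0:ℕ), true) ++ [(β, b)]) <+:
        (List.replicate t ((0:ℕ), true) ++ l') →
      ((β, b) = ((0:ℕ), true)) ∨ (k = t ∧ ∃ rest, l' = (β, b) :: rest) ∨
        (∃ rest, l' = ((0:ℕ), true) :: rest) := by
  intro t
  induction t with
  | zero =>
    intro k h
    simp only [List.replicate_zero, List.nil_append] at h
    cases k with
    | zero =>
      simp only [List.replicate_zero, List.nil_append] at h
      rcases h with ⟨s, hs⟩
      exact Or.inr (Or.inl ⟨rfl, s, hs.symm⟩)
    | succ k =>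
      rw [List.replicate_succ, List.cons_append] at h
      rcases h with ⟨s, hs⟩
      exact Or.inr (Or.inr ⟨_, hs.symm⟩)
  | succ t ih =>
    intro k h
    rw [List.replicate_succ, List.cons_append] at h
    cases k with
    | zero =>
      simp only [List.replicate_zero, List.nil_append] at h
      rw [List.cons_prefix_cons] at h
      exact Or.inl h.1
    | succ k =>
      rw [List.replicate_succ, List.cons_append, List.cons_prefix_cons] at h
      rcases ih k h.2 with h1 | ⟨h1, h2⟩ | h1
      · exact Or.inl h1
      · exact Or.inr (Or.inl ⟨by omega, h2⟩)
      · exact Or.inr (Or.inr h1)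

/-- the main junction lemma: no forbidden prefix at a nonzero letter -/
lemma noFP_junction {p r t : ℕ} {ε : Bool} {l' : List (ℕ × Bool)} (hr : 1 ≤ r)
    (h : ∀ x rest, l' = x :: rest →
      (x = ((0:ℕ), false) ∧ t = 0) ∨
      (1 ≤ x.1 ∧ ((t = 0 ∧ ¬(x.1 < r ∧ x.2 = true) ∧ ¬(x.1 = r ∧ x.2 ≠ ε)) ∨
                  (t = 1 ∧ x.2 = false ∧ r ≤ x.1)))) :
    ∀ f, f <+: ((r, ε) :: (List.replicate t ((0:ℕ), true) ++ l')) → ¬ Forbidden p f := by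
  intro f hf hF
  rcases hF with ⟨i, e, _, rfl⟩ | ⟨a, b, k, e, hb, hba, _, rfl⟩ | ⟨a, b, k, e, hb, hba, _, rfl⟩ |
    ⟨a, b, k, e, ha, hab, _, rfl⟩ | ⟨a, b, k, e, ha, hab, _, rfl⟩
  · -- type 1 : [(i,e), (i,!e)]
    rw [List.cons_prefix_cons] at hf
    obtain ⟨h1, h2⟩ := hf
    have hi : i = r := (Prod.mk.injEq .. ▸ h1).1
    have he : e = ε := (Prod.mk.injEq .. ▸ h1).2
    rw [hi, he] at h2
    have h2' : (List.replicate 0 ((0:ℕ), true) ++ [(r, !ε)]) <+: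
        (List.replicate t ((0:ℕ), true) ++ l') := by simpa using h2
    rcases key_prefix t 0 h2' with h3 | ⟨h3, rest, h4⟩ | ⟨rest, h4⟩
    · have : r = 0 := (Prod.mk.injEq .. ▸ h3).1
      omega
    · rcases h (r, !ε) rest h4 with ⟨h5, _⟩ | ⟨_, ⟨_, _, h5⟩ | ⟨h5, _, _⟩⟩
      · have : r = 0 := (Prod.mk.injEq .. ▸ h5).1
        omega
      · exact h5 ⟨rfl, by simp⟩
      · omega
    · rcases h ((0:ℕ), true) rest h4 with ⟨h5, _⟩ | ⟨h5, _⟩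
      · simp at h5
      · simp at h5
  · -- type 2 : (a,e) :: replicate k T ++ [(b, true)], 1 ≤ b < a
    rw [List.cons_prefix_cons] at hf
    obtain ⟨h1, h2⟩ := hf
    have hi : a = r := (Prod.mk.injEq .. ▸ h1).1
    subst hi
    rcases key_prefix t k h2 with h3 | ⟨h3, rest, h4⟩ | ⟨rest, h4⟩
    · have : b = 0 := (Prod.mk.injEq .. ▸ h3).1
      omega
    · rcases h (b, true) rest h4 with ⟨h5, _⟩ | ⟨_, ⟨_, h5, _⟩ | ⟨_, h5, _⟩⟩
      · have : (true : Bool) = false := (Prod.mk.injEq .. ▸ h5).2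
        simp at this
      · exact h5 ⟨hba, rfl⟩
      · simp at h5
    · rcases h ((0:ℕ), true) rest h4 with ⟨h5, _⟩ | ⟨h5, _⟩
      · simp at h5
      · simp at h5
  · -- type 3 : (a,e) :: replicate (k+1) T ++ [(b, false)], 1 ≤ b < a
    rw [List.cons_prefix_cons] at hf
    obtain ⟨h1, h2⟩ := hf
    have hi : a = r := (Prod.mk.injEq .. ▸ h1).1
    subst hi
    rcases key_prefix t (k+1) h2 with h3 | ⟨h3, rest, h4⟩ | ⟨rest, h4⟩
    · have : (false : Bool) = true := (Prod.mk.injEq .. ▸ h3).2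
      simp at this
    · rcases h (b, false) rest h4 with ⟨h5, h6⟩ | ⟨_, ⟨h5, _, _⟩ | ⟨_, _, h5⟩⟩
      · have : b = 0 := (Prod.mk.injEq .. ▸ h5).1
        omega
      · omega
      · simp at h5; omega
    · rcases h ((0:ℕ), true) rest h4 with ⟨h5, _⟩ | ⟨h5, _⟩
      · simp at h5
      · simp at h5
  · -- type 4 : (a,e) :: replicate (k+1) T ++ [(b, true)], 1 ≤ a ≤ b
    rw [List.cons_prefix_cons] at hf
    obtain ⟨h1, h2⟩ := hf
    have hi : a = r := (Prod.mk.injEq .. ▸ h1).1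
    subst hi
    rcases key_prefix t (k+1) h2 with h3 | ⟨h3, rest, h4⟩ | ⟨rest, h4⟩
    · have : b = 0 := (Prod.mk.injEq .. ▸ h3).1
      omega
    · rcases h (b, true) rest h4 with ⟨h5, h6⟩ | ⟨_, ⟨h5, _, _⟩ | ⟨_, h5, _⟩⟩
      · omega
      · omega
      · simp at h5
    · rcases h ((0:ℕ), true) rest h4 with ⟨h5, _⟩ | ⟨h5, _⟩
      · simp at h5
      · simp at h5
  · -- type 5 : (a,e) :: replicate (k+2) T ++ [(b, false)], 1 ≤ a ≤ b
    rw [List.cons_prefix_cons] at hf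
    obtain ⟨h1, h2⟩ := hf
    have hi : a = r := (Prod.mk.injEq .. ▸ h1).1
    subst hi
    rcases key_prefix t (k+2) h2 with h3 | ⟨h3, rest, h4⟩ | ⟨rest, h4⟩
    · have : (false : Bool) = true := (Prod.mk.injEq .. ▸ h3).2
      simp at this
    · rcases h (b, false) rest h4 with ⟨h5, h6⟩ | ⟨_, ⟨h5, _, _⟩ | ⟨h5, _, _⟩⟩
      · have : b = 0 := (Prod.mk.injEq .. ▸ h5).1
        omega
      · omega
      · omega
    · rcases h ((0:ℕ), true) rest h4 with ⟨h5, _⟩ | ⟨h5, _⟩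
      · simp at h5
      · simp at h5

lemma nfin_repT {p : ℕ} {l : List (ℕ × Bool)} (hl : NFin p l)
    (hhd : ∀ rest, l ≠ ((0:ℕ), false) :: rest) (hp : 2 ≤ p) :
    ∀ n, NFin p (List.replicate n ((0:ℕ), true) ++ l) := by
  intro n
  induction n with
  | zero => simpa using hl
  | succ n ih =>
    rw [List.replicate_succ, List.cons_append]
    refine nfin_cons (by omega) ih (noFP_zT ?_)
    intro rest hc
    cases n with
    | zero => simp at hc; exact hhd rest hc
    | succ n => simp [List.replicate_succ] at hc

lemma nfin_repF {p : ℕ} {l : List (ℕ × Bool)} (hl : NFin p l)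
    (hhd : ∀ rest, l ≠ ((0:ℕ), true) :: rest) (hp : 2 ≤ p) :
    ∀ n, NFin p (List.replicate n ((0:ℕ), false) ++ l) := by
  intro n
  induction n with
  | zero => simpa using hl
  | succ n ih =>
    rw [List.replicate_succ, List.cons_append]
    refine nfin_cons (by omega) ih (noFP_zF ?_)
    intro rest hc
    cases n with
    | zero => simp at hc; exact hhd rest hc
    | succ n => simp [List.replicate_succ] at hc

/-- arithmetic: decomposition facts -/
lemma decomp (p j : ℕ) (hp : 2 ≤ p) (hj : 1 ≤ j) :
    ((j - 1) % (p - 1) + 1) + ((j - 1) / (p - 1)) * (p - 1) = j := by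
  have := Nat.mod_add_div' (j - 1) (p - 1)
  omega

lemma rr_bounds (p j : ℕ) (hp : 2 ≤ p) (hj : 1 ≤ j) :
    1 ≤ (j - 1) % (p - 1) + 1 ∧ (j - 1) % (p - 1) + 1 ≤ p - 1 := by
  have := Nat.mod_lt (j - 1) (y := p - 1) (by omega)
  omega

lemma mul_cancel_aux {q r1 r2 d1 d2 : ℕ} (hq : 1 ≤ q) (h1 : 1 ≤ r1) (h1' : r1 ≤ q)
    (h2 : 1 ≤ r2) (h2' : r2 ≤ q) (h : r1 + d1 * q < r2 + d2 * q) :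
    d1 < d2 ∨ (d1 = d2 ∧ r1 < r2) := by
  rcases lt_trichotomy d1 d2 with hd | hd | hd
  · exact Or.inl hd
  · subst hd; right; exact ⟨rfl, by omega⟩
  · exfalso
    have e1 : r2 + d2 * q ≤ q + d2 * q := by omega
    have e2 : q + d2 * q = (d2 + 1) * q := by ring
    have e3 : (d2 + 1) * q ≤ d1 * q := Nat.mul_le_mul_right q (by omega)
    omega

lemma mul_close_aux {q r1 r2 d1 d2 : ℕ} (hq : 1 ≤ q) (h1 : 1 ≤ r1) (h1' : r1 ≤ q)
    (h2 : 1 ≤ r2) (h2' : r2 ≤ q) (hlt : r2 + d2 * q < r1 + d1 * q)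
    (hcl : r1 + d1 * q ≤ r2 + d2 * q + q) :
    (d1 = d2 ∧ r2 < r1) ∨ (d1 = d2 + 1 ∧ r1 ≤ r2) := by
  rcases mul_cancel_aux hq h2 h2' h1 h1' hlt with hd | ⟨hd, hr⟩
  · right
    have hd1 : d1 = d2 + 1 := by
      by_contra hne
      have hge : d2 + 2 ≤ d1 := by omega
      have e3 : (d2 + 2) * q ≤ d1 * q := Nat.mul_le_mul_right q hge
      have e2 : (d2 + 2) * q = d2 * q + q + q := by ring
      omega
    constructor
    · exact hd1
    · subst hd1
      have e2 : (d2 + 1) * q = d2 * q + q := by ring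
      omega
  · exact Or.inl ⟨hd.symm, hr⟩

/-- shape of `barMap p w` determined by the head of `w` -/
def Shape (p : ℕ) : List (ℕ × Bool) → List (ℕ × Bool) → Prop
  | [], v => v = []
  | (j, ε) :: _, v =>
    if j = 0 then
      if ε then
        (∃ t rest, v = List.replicate t ((0:ℕ), true) ++ rest ∧ HNZ rest) ∨
        (∃ f rest, v = List.replicate (f + 1) ((0:ℕ), false) ++ rest ∧ HNZ rest)
      else ∃ f rest, v = List.replicate (f + 1) ((0:ℕ), false) ++ rest ∧ HNZ rest
    else ∃ rest, v = List.replicate ((j - 1) / (p - 1)) ((0:ℕ), false) ++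
      (((j - 1) % (p - 1) + 1, ε) :: rest)

lemma main (p : ℕ) (hp : 2 ≤ p) : ∀ w, NInf p w → NFin p (barMap p w) ∧ Shape p w (barMap p w) := by
  intro w
  induction w with
  | nil => intro _; exact ⟨nfin_nil p, rfl⟩
  | cons a w ih =>
    intro hw
    obtain ⟨hN, hS⟩ := ih (List.IsChain.tail hw)
    obtain ⟨j, ε⟩ := a
    rw [barMap_cons]
    by_cases hj : j = 0
    · -- zero letter
      subst hj
      have hle : letterExpand p ((0:ℕ), ε) = [((0:ℕ), ε)] := by simp [letterExpand]
      rw [hle, List.foldr_cons, List.foldr_nil]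
      cases w with
      | nil =>
        have hv : barMap p [] = [] := rfl
        rw [hv]
        have hst : step ((0:ℕ), ε) ([] : List (ℕ × Bool)) = [((0:ℕ), ε)] := rfl
        rw [hst]
        cases ε
        · exact ⟨nfin_cons (by omega) (nfin_nil p) (noFP_zF (by simp)),
            by simp only [Shape, if_pos rfl, Bool.false_eq_true, if_false]
               exact ⟨0, [], by simp, trivial⟩⟩
        · exact ⟨nfin_cons (by omega) (nfin_nil p) (noFP_zT (by simp)),
            by simp only [Shape, if_pos rfl, if_true]
               exact Or.inl ⟨1, [], by simp, trivial⟩⟩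
      | cons b w2 =>
        have hrel := (List.isChain_cons_cons.mp hw).1
        obtain ⟨jb, εb⟩ := b
        simp only [Prod.fst, Prod.snd] at hrel
        cases ε
        · -- a = (0, false)
          have hrel' : 0 < jb ∨ (jb = 0 ∧ εb = false) := by
            rcases hrel with h | ⟨h1, h2⟩ | ⟨h1, _⟩
            · exact Or.inl (by omega)
            · exact Or.inr ⟨h1.symm, h2.symm⟩
            · omega
          rcases hrel' with hjb | ⟨hjb, hεb⟩
          · -- b nonzero
            simp only [Shape, if_neg (by omega : ¬ jb = 0)] at hS
            obtain ⟨rest, hveq⟩ := hS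
            have hrb : HNZ (((jb - 1) % (p - 1) + 1, εb) :: rest) := by
              simp [HNZ]
            have hne := hveq ▸ repF_ne_zT ((jb - 1) / (p - 1)) _ hrb
            rw [step_zF _ hne]
            refine ⟨nfin_cons (by omega) hN (noFP_zF hne), ?_⟩
            simp only [Shape, if_pos rfl, Bool.false_eq_true, if_false]
            exact ⟨(jb - 1) / (p - 1), ((jb - 1) % (p - 1) + 1, εb) :: rest,
              by rw [hveq]; simp [List.replicate_succ], hrb⟩
          · -- b = (0, false)
            subst hjb hεb
            simp only [Shape, if_pos rfl, Bool.false_eq_true, if_false] at hS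
            obtain ⟨f, rest, hveq, hz⟩ := hS
            have hne := hveq ▸ repF_ne_zT (f + 1) rest hz
            rw [step_zF _ hne]
            refine ⟨nfin_cons (by omega) hN (noFP_zF hne), ?_⟩
            simp only [Shape, if_pos rfl, Bool.false_eq_true, if_false]
            exact ⟨f + 1, rest, by rw [hveq]; simp [List.replicate_succ], hz⟩
        · -- a = (0, true)
          have hrel' : 0 < jb ∨ (jb = 0 ∧ εb = true) := by
            rcases hrel with h | ⟨h1, h2⟩ | ⟨h1, _⟩
            · exact Or.inl (by omega)
            · exact Or.inr ⟨h1.symm, h2.symm⟩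
            · omega
          rcases hrel' with hjb | ⟨hjb, hεb⟩
          · -- b nonzero
            simp only [Shape, if_neg (by omega : ¬ jb = 0)] at hS
            obtain ⟨rest, hveq⟩ := hS
            cases hdb : (jb - 1) / (p - 1) with
            | zero =>
              rw [hdb] at hveq
              simp only [List.replicate_zero, List.nil_append] at hveq
              have hne : ∀ r', barMap p ((jb, εb) :: w2) ≠ ((0:ℕ), false) :: r' := by
                intro r' hc
                rw [hveq] at hc
                simp at hc
              rw [step_zT _ hne]
              refine ⟨nfin_cons (by omega) hN (noFP_zT hne), ?_⟩
              simp only [Shape, if_pos rfl, if_true]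
              exact Or.inl ⟨1, barMap p ((jb, εb) :: w2),
                by rw [List.replicate_one]; simp, by rw [hveq]; simp [HNZ]⟩
            | succ k =>
              rw [hdb, List.replicate_succ, List.cons_append] at hveq
              rw [hveq, step_zT_cancel]
              constructor
              · exact nfin_infix hN ⟨[((0:ℕ), false)], [], by simp [hveq]⟩
              · simp only [Shape, if_pos rfl, if_true]
                cases k with
                | zero =>
                  exact Or.inl ⟨0, ((jb - 1) % (p - 1) + 1, εb) :: rest, by simp, by simp [HNZ]⟩
                | succ k' =>
                  exact Or.inr ⟨k', ((jb - 1) % (p - 1) + 1, εb) :: rest,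
                    by simp [List.replicate_succ], by simp [HNZ]⟩
          · -- b = (0, true)
            subst hjb hεb
            simp only [Shape, if_pos rfl, if_true] at hS
            rcases hS with ⟨t, rest, hveq, hz⟩ | ⟨f, rest, hveq, hz⟩
            · have hne := hveq ▸ repT_ne_zF t rest hz
              rw [step_zT _ hne]
              refine ⟨nfin_cons (by omega) hN (noFP_zT hne), ?_⟩
              simp only [Shape, if_pos rfl, if_true]
              exact Or.inl ⟨t + 1, rest, by rw [hveq]; simp [List.replicate_succ], hz⟩
            · rw [List.replicate_succ, List.cons_append] at hveq
              rw [hveq, step_zT_cancel]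
              constructor
              · exact nfin_infix hN ⟨[((0:ℕ), false)], [], by simp [hveq]⟩
              · simp only [Shape, if_pos rfl, if_true]
                cases f with
                | zero => exact Or.inl ⟨0, rest, by simp, hz⟩
                | succ f' =>
                  exact Or.inr ⟨f', rest, by simp [List.replicate_succ], hz⟩
    · -- nonzero letter
      set d := (j - 1) / (p - 1) with hd_def
      set r := (j - 1) % (p - 1) + 1 with hr_def
      have hj1 : 1 ≤ j := by omega
      obtain ⟨hr1, hr2⟩ := rr_bounds p j hp hj1
      have hdec : r + d * (p - 1) = j := decomp p j hp hj1
      have hle : letterExpand p (j, ε) =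
          (List.replicate d ((0:ℕ), false) ++ [(r, ε)]) ++ List.replicate d ((0:ℕ), true) := by
        simp only [letterExpand, hj, if_false]; rfl
      rw [hle, List.foldr_append, List.foldr_append, List.foldr_cons, List.foldr_nil]
      cases w with
      | nil =>
        have hv : barMap p [] = ([] : List (ℕ × Bool)) := rfl
        rw [hv]
        rw [foldr_repT d [] (by simp), step_nz (r, ε) (by simp) _,
          foldr_repF d _ (by rintro rest h; simp at h)]
        constructor
        · refine nfin_repF ?_ ?_ hp d
          · refine nfin_cons (by omega) (nfin_repT (nfin_nil p) (by simp) hp d) ?_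
            exact noFP_junction hr1 (by simp)
          · rintro rest h; simp at h
        · simp only [Shape, if_neg hj]
          exact ⟨List.replicate d ((0:ℕ), true) ++ [], rfl⟩
      | cons b w2 =>
        have hrel := (List.isChain_cons_cons.mp hw).1
        obtain ⟨jb, εb⟩ := b
        simp only [Prod.fst, Prod.snd] at hrel
        by_cases hjb : jb = 0
        · -- next letter is x_0 : must be (0, false) and j ≤ p - 1, d = 0
          subst hjb
          have hcc : 0 < j ∧ j < p ∧ εb = false := by
            rcases hrel with h | ⟨h1, _⟩ | ⟨_, h2, h3⟩
            · omega
            · omega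
            · exact ⟨by omega, by omega, h3⟩
          obtain ⟨_, hjp, hεb⟩ := hcc
          subst hεb
          have hd0 : d = 0 := by
            rw [hd_def]
            exact Nat.div_eq_of_lt (by omega)
          rw [hd0]
          simp only [List.replicate_zero, List.foldr_nil]
          simp only [Shape, if_pos rfl, Bool.false_eq_true, if_false] at hS
          obtain ⟨f, rest, hveq, hz⟩ := hS
          rw [step_nz (r, ε) (by simp) _]
          constructor
          · refine nfin_cons (by omega) hN ?_
            have hcast : barMap p ((0, false) :: w2) =
                List.replicate 0 ((0:ℕ), true) ++ barMap p ((0, false) :: w2) := by simp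
            rw [hcast]
            refine noFP_junction hr1 ?_
            intro x rest' hx
            left
            refine ⟨?_, rfl⟩
            rw [hveq, List.replicate_succ, List.cons_append] at hx
            exact (List.cons.injEq .. ▸ hx).1.symm
          · simp only [Shape, if_neg hj]
            refine ⟨barMap p ((0, false) :: w2), ?_⟩
            rw [← hd_def, ← hr_def, hd0]
            simp
        · -- next letter nonzero
          set db := (jb - 1) / (p - 1) with hdb_def
          set rb := (jb - 1) % (p - 1) + 1 with hrb_def
          have hjb1 : 1 ≤ jb := by omega
          obtain ⟨hrb1, hrb2⟩ := rr_bounds p jb hp hjb1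
          have hdecb : rb + db * (p - 1) = jb := decomp p jb hp hjb1
          simp only [Shape, if_neg hjb] at hS
          obtain ⟨rest, hveq⟩ := hS
          set L := (rb, εb) :: rest with hL_def
          have hLne : ∀ r', L ≠ ((0:ℕ), false) :: r' := by
            rintro r' hc
            rw [hL_def] at hc
            have := (List.cons.injEq .. ▸ hc).1
            have : rb = 0 := (Prod.mk.injEq .. ▸ this).1
            omega
          have hLnz : HNZ L := by rw [hL_def]; simp [HNZ]; omega
          have hNL : NFin p L := by
            refine nfin_infix hN ⟨List.replicate db ((0:ℕ), false), [], ?_⟩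
            rw [hveq]; simp; rfl
          have hcase : d < db ∨
              (d = db ∧ ¬(rb < r ∧ εb = true) ∧ ¬(rb = r ∧ εb ≠ ε)) ∨
              (d = db + 1 ∧ εb = false ∧ r ≤ rb) := by
            rcases hrel with hab | ⟨hj1', hj2'⟩ | ⟨hlt, hclose, hεb⟩
            · have h' : r + d * (p - 1) < rb + db * (p - 1) := by
                rw [hdec, hdecb]; exact hab
              rcases mul_cancel_aux (by omega) hr1 hr2 hrb1 hrb2 h' with h1 | ⟨h1, h2⟩
              · exact Or.inl h1
              · exact Or.inr (Or.inl ⟨h1, by omega, by omega⟩)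
            · have hdd : d = db := by rw [hd_def, hdb_def, hj1']
              have hrr : r = rb := by rw [hr_def, hrb_def, hj1']
              exact Or.inr (Or.inl ⟨hdd, by omega, by
                rintro ⟨-, h2⟩; exact h2 hj2'.symm⟩)
            · have h1' : rb + db * (p - 1) < r + d * (p - 1) := by
                rw [hdec, hdecb]; exact hlt
              have h2' : r + d * (p - 1) ≤ rb + db * (p - 1) + (p - 1) := by
                rw [hdec, hdecb]; omega
              rcases mul_close_aux (by omega) hr1 hr2 hrb1 hrb2 h1' h2' with ⟨h1, h2⟩ | ⟨h1, h2⟩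
              · refine Or.inr (Or.inl ⟨h1, ?_, by omega⟩)
                rintro ⟨-, hc⟩; rw [hεb] at hc; simp at hc
              · exact Or.inr (Or.inr ⟨h1, hεb, h2⟩)
          rw [hveq, foldr_repT_cancel d L hLne db]
          rcases hcase with hlt | ⟨hdd, hc1, hc2⟩ | ⟨hdd, hεb, hrrb⟩
          · -- d < db : a block of (0,false) remains between the letters
            rw [if_pos (by omega : d ≤ db)]
            rw [step_nz (r, ε) (by simp) _,
              foldr_repF d _ (by rintro rest' h; simp at h)]
            have hsplit : List.replicate db ((0:ℕ), false) =
                List.replicate d ((0:ℕ), false) ++ List.replicate (db - d) ((0:ℕ), false) := by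
              rw [← List.replicate_add]; congr 1; omega
            have hNmid : NFin p (List.replicate (db - d) ((0:ℕ), false) ++ L) := by
              refine nfin_infix hN ⟨List.replicate d ((0:ℕ), false), [], ?_⟩
              rw [hveq, hsplit, List.append_nil, List.append_assoc]
            constructor
            · refine nfin_repF ?_ (by rintro rest' h; simp at h) hp d
              refine nfin_cons (by omega) hNmid ?_
              have hcast : List.replicate (db - d) ((0:ℕ), false) ++ L =
                  List.replicate 0 ((0:ℕ), true) ++ (List.replicate (db - d) ((0:ℕ), false) ++ L) := by
                simp
              rw [hcast]
              refine noFP_junction hr1 ?_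
              intro x rest' hx
              left
              refine ⟨?_, rfl⟩
              have hdb1 : db - d = (db - d - 1) + 1 := by omega
              rw [hdb1, List.replicate_succ, List.cons_append] at hx
              exact (List.cons.injEq .. ▸ hx).1.symm
            · simp only [Shape, if_neg hj]
              exact ⟨List.replicate (db - d) ((0:ℕ), false) ++ L, rfl⟩
          · -- d = db : letters become adjacent
            rw [if_pos (by omega : d ≤ db)]
            rw [show db - d = 0 by omega]
            simp only [List.replicate_zero, List.nil_append]
            rw [step_nz (r, ε) (by simp) _,
              foldr_repF d _ (by rintro rest' h; rw [hL_def] at h; simp at h)]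
            constructor
            · refine nfin_repF ?_ (by rintro rest' h; simp at h) hp d
              refine nfin_cons (by omega) hNL ?_
              have hcast : L = List.replicate 0 ((0:ℕ), true) ++ L := by simp
              rw [hcast]
              refine noFP_junction hr1 ?_
              intro x rest' hx
              right
              rw [hL_def] at hx
              have hx1 := (List.cons.injEq .. ▸ hx).1
              constructor
              · rw [← hx1]; exact hrb1
              · refine Or.inl ⟨rfl, ?_, ?_⟩
                · rw [← hx1]; exact hc1
                · rw [← hx1]; exact hc2
            · simp only [Shape, if_neg hj]
              exact ⟨L, rfl⟩
          · -- d = db + 1 : exactly one (0,true) between the letters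
            rw [if_neg (by omega : ¬ d ≤ db)]
            rw [step_nz (r, ε) (by simp) _,
              foldr_repF d _ (by rintro rest' h; simp at h)]
            constructor
            · refine nfin_repF ?_ (by rintro rest' h; simp at h) hp d
              refine nfin_cons (by omega) (nfin_repT hNL hLne hp (d - db)) ?_
              refine noFP_junction hr1 ?_
              intro x rest' hx
              right
              rw [hL_def] at hx
              have hx1 := (List.cons.injEq .. ▸ hx).1
              constructor
              · rw [← hx1]; exact hrb1
              · refine Or.inr ⟨by omega, ?_, ?_⟩
                · rw [← hx1, hεb]
                · rw [← hx1]; exact hrrb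
            · simp only [Shape, if_neg hj]
              exact ⟨List.replicate (d - db) ((0:ℕ), true) ++ L, rfl⟩


/-- If `w ∈ N_inf(p)` then `w̄` contains no forbidden subword. -/
theorem stmt4 (p : ℕ) (hp : 2 ≤ p) (w : List (ℕ × Bool)) (hw : NInf p w) :
    NFin p (barMap p w) := by
  exact (main p hp w hw).1
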